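/- Assume θ₁, θ₂, θ₃ are all nonzero, m ∈ ℚ is positive, θ₁·θ₂ = 2m·θ₃², the setup of the context, and N − b² > 0. Set λ₁ := b + i·√(N − b²) and λ₂ := b − i·√(N − b²). Then the eigenspace of Ψ on V_ℂ ⊕ V_ℂ^∨ for the eigenvalue +i·√(N − b²) is {(v, λ₁·g(v)) : v ∈ V_ℂ} and that for −i·√(N − b²) is {(v, λ₂·g(v)) : v ∈ V_ℂ}; each of these eigenspaces is isotropic for ⟨,⟩_{θ,h}; and for all v,w ∈ V_ℂ one has ⟨(v, λ₁·g(v)), (w, λ₂·g(w))⟩_{θ,h} = θ₁·c⁻²·e⁻¹·(2c²e − s²/m)·ω_g(v,w). -/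

import Mathlib

/-!
Concrete model of the linear algebra of O'Grady's "Compact tori associated to hyperkähler
manifolds of Kummer type".

`V` is a free ℤ-module of rank 4; we model `V_ℂ = V ⊗ ℂ` as `Fin 4 → ℂ` (standard integral
structure), and its dual `V_ℂ^∨` also as `Fin 4 → ℂ` via the dot-product pairing
`⟨ℓ, v⟩ = ℓ ⬝ᵥ v` (dual basis coordinates).  The volume form `vol : ⋀⁴V → ℤ` is the one
with `vol(e₀∧e₁∧e₂∧e₃) = 1`.  We model `⋀²V_ℂ` (and `⋀²V_ℂ^∨`) as `Fin 6 → ℂ` using the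
basis `e₀∧e₁, e₀∧e₂, e₀∧e₃, e₁∧e₂, e₁∧e₃, e₂∧e₃` (resp. the dual one).
-/

noncomputable section

open Matrix Complex

/-- Model of `V_ℂ` (and of its dual `V_ℂ^∨`). -/
abbrev Vc : Type := Fin 4 → ℂ

/-- Model of `⋀²V_ℂ` (and of `⋀²V_ℂ^∨`), coordinates w.r.t. the basis
`e₀∧e₁, e₀∧e₂, e₀∧e₃, e₁∧e₂, e₁∧e₃, e₂∧e₃`. -/
abbrev W2 : Type := Fin 6 → ℂ

/-- The wedge product `v ∧ w ∈ ⋀²V_ℂ` of two vectors. -/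
def w2 (v w : Vc) : W2 :=
  ![v 0 * w 1 - v 1 * w 0, v 0 * w 2 - v 2 * w 0, v 0 * w 3 - v 3 * w 0,
    v 1 * w 2 - v 2 * w 1, v 1 * w 3 - v 3 * w 1, v 2 * w 3 - v 3 * w 2]

/-- `vol(a ∧ b)` for `a, b ∈ ⋀²V_ℂ`: the nondegenerate symmetric pairing `( , )` on `⋀²V_ℂ`.
(The same formula computes the dual volume form `vol^∨` on `⋀²V_ℂ^∨` in dual coordinates.) -/
def volp (a b : W2) : ℂ :=
  a 0 * b 5 - a 1 * b 4 + a 2 * b 3 + a 3 * b 2 - a 4 * b 1 + a 5 * b 0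

/-- The isomorphism `ι : ⋀²(V_ℂ^∨) → ⋀²V_ℂ` defined by the pairing `( , )`:
it satisfies `vol (ι Ω ∧ v ∧ w) = Ω(v,w)` for all `v, w`. -/
def iotaMap (Ω : W2) : W2 := ![Ω 5, -Ω 4, Ω 3, Ω 2, -Ω 1, Ω 0]

/-- The map `Φ_θ` on decomposable elements: for `x = (v,g)` and `y = (w,h)` in
`V_ℂ ⊕ V_ℂ^∨`, `Φ_θ(x ∧ y) = (θ₁·v∧w + θ₂·ι(g∧h), θ₃·(g(w) − h(v)))`. -/
def Phi (t1 t2 t3 : ℤ) (x y : Vc × Vc) : W2 × ℂ :=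
  ((t1 : ℂ) • w2 x.1 y.1 + (t2 : ℂ) • iotaMap (w2 x.2 y.2),
    (t3 : ℂ) * (x.2 ⬝ᵥ y.1 - y.2 ⬝ᵥ x.1))

/-- A map `f : V_ℂ → V_ℂ^∨` is antisymmetric if `⟨f v, w⟩ = −⟨f w, v⟩` for all `v, w`. -/
def IsAnti (f : Vc → Vc) : Prop := ∀ v w : Vc, f v ⬝ᵥ w = -(f w ⬝ᵥ v)

/-- The `i`-th standard basis vector. -/
def ef (i : Fin 4) : Vc := fun j => if j = i then 1 else 0

/-- `ω_f ∈ ⋀²(V_ℂ^∨)` attached to a map `f : V_ℂ → V_ℂ^∨`: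
`ω_f(v,w) = (1/2)(⟨f w, v⟩ − ⟨f v, w⟩)`, written in coordinates `ω_f(eᵢ,eⱼ)`, `i<j`. -/
def omegaF (f : Vc → Vc) : W2 :=
  ![(f (ef 1) ⬝ᵥ ef 0 - f (ef 0) ⬝ᵥ ef 1) / 2,
    (f (ef 2) ⬝ᵥ ef 0 - f (ef 0) ⬝ᵥ ef 2) / 2,
    (f (ef 3) ⬝ᵥ ef 0 - f (ef 0) ⬝ᵥ ef 3) / 2,
    (f (ef 2) ⬝ᵥ ef 1 - f (ef 1) ⬝ᵥ ef 2) / 2,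
    (f (ef 3) ⬝ᵥ ef 1 - f (ef 1) ⬝ᵥ ef 3) / 2,
    (f (ef 3) ⬝ᵥ ef 2 - f (ef 2) ⬝ᵥ ef 3) / 2]

/-- The Pfaffian of an antisymmetric map `f : V_ℂ → V_ℂ^∨`, defined by
`vol^∨(ω_f ∧ ω_f) = 2·Pf(f)`. -/
def pfaff (f : Vc → Vc) : ℂ := volp (omegaF f) (omegaF f) / 2

/-- Evaluation against a fixed vector, as a linear functional on the dual. -/
def dotL (u : Vc) : Vc →ₗ[ℂ] ℂ where
  toFun ℓ := ℓ ⬝ᵥ u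
  map_add' x y := add_dotProduct x y u
  map_smul' c x := by simp

/-- The annihilator `Ann(U) ⊂ V_ℂ^∨` of a subspace `U ⊂ V_ℂ`. -/
def AnnS (U : Submodule ℂ Vc) : Submodule ℂ Vc :=
  ⨅ u ∈ (U : Set Vc), LinearMap.ker (dotL u)

/-- Complex conjugation on `V_ℂ`, induced by the integral structure. -/
def cV (v : Vc) : Vc := fun i => (starRingEnd ℂ) (v i)

/-- Complex conjugation on `V_ℂ ⊕ V_ℂ^∨`, induced by the integral structure `V ⊕ V^∨`. -/
def cP (x : Vc × Vc) : Vc × Vc := (cV x.1, cV x.2)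

/-- Complex conjugation on `⋀²V_ℂ ⊕ ℂ`, induced by the real structure `⋀²V_ℝ ⊕ ℝ`. -/
def cW (x : W2 × ℂ) : W2 × ℂ := (fun k => (starRingEnd ℂ) (x.1 k), (starRingEnd ℂ) x.2)

/-- The symmetric bilinear form `(α + x·ζ, β + y·ζ) = vol(α∧β) − m·x·y` on `⋀²V_ℂ ⊕ ℂ`. -/
def Bf (m : ℚ) (x y : W2 × ℂ) : ℂ := volp x.1 y.1 - (m : ℂ) * x.2 * y.2

/-- Membership in (the affine cone over) the period domain
`D = {[σ] : (σ,σ) = 0, (σ,σ̄) > 0}`. -/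
def memD (m : ℚ) (σ : W2 × ℂ) : Prop :=
  σ ≠ 0 ∧ Bf m σ σ = 0 ∧ (Bf m σ (cW σ)).im = 0 ∧ 0 < (Bf m σ (cW σ)).re

/-- The class `h₀ = c(e·v₁^∨∧v₂^∨ + v₃^∨∧v₄^∨) ∈ ⋀²V^∨`, in dual coordinates. -/
def h0v (c e : ℤ) : W2 := ![(c : ℂ) * (e : ℂ), 0, 0, 0, 0, (c : ℂ)]

/-- Evaluation of `h = h₀ + s·ζ^∨ ∈ (⋀²V ⊕ ℤ)^∨` on `⋀²V_ℂ ⊕ ℂ`. -/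
def hev (c e s : ℤ) (x : W2 × ℂ) : ℂ :=
  (c : ℂ) * (e : ℂ) * x.1 0 + (c : ℂ) * x.1 5 + (s : ℂ) * x.2

/-- `N = θ₁/(c²·e·θ₂)`. -/
def Nq (t1 t2 c e : ℤ) : ℚ := (t1 : ℚ) / ((c : ℚ) ^ 2 * (e : ℚ) * (t2 : ℚ))

/-- `b = s·θ₃/(c²·e·θ₂)`. -/
def bq (t2 t3 c e s : ℤ) : ℚ := (s : ℚ) * (t3 : ℚ) / ((c : ℚ) ^ 2 * (e : ℚ) * (t2 : ℚ))

/-- The endomorphism `Ψ(v,ℓ) = (g⁻¹(ℓ) − b·v, b·ℓ − N·g(v))` of `V_ℂ ⊕ V_ℂ^∨`. -/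
def PsiL (g : Vc ≃ₗ[ℂ] Vc) (N b : ℚ) : (Vc × Vc) →ₗ[ℂ] Vc × Vc :=
  LinearMap.prod
    (g.symm.toLinearMap ∘ₗ LinearMap.snd ℂ Vc Vc - (b : ℂ) • LinearMap.fst ℂ Vc Vc)
    ((b : ℂ) • LinearMap.snd ℂ Vc Vc - (N : ℂ) • (g.toLinearMap ∘ₗ LinearMap.fst ℂ Vc Vc))

/-- The rational subspace `V_ℚ ⊕ V_ℚ^∨ ⊂ V_ℂ ⊕ V_ℂ^∨`. -/
def ratSet : Set (Vc × Vc) :=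
  {p | (∀ i, ∃ q : ℚ, p.1 i = (q : ℂ)) ∧ (∀ i, ∃ q : ℚ, p.2 i = (q : ℂ))}

/-- The complex number `i·√(N − b²)`. -/
def sqNb (N b : ℚ) : ℂ := Complex.I * ((Real.sqrt ((N - b ^ 2 : ℚ) : ℝ) : ℝ) : ℂ)

/-- The alternating form `⟨x,y⟩_{θ,h} = ⟨h, Φ_θ(x∧y)⟩` on `V_ℂ ⊕ V_ℂ^∨`. -/
def Eth (t1 t2 t3 c e s : ℤ) (x y : Vc × Vc) : ℂ := hev c e s (Phi t1 t2 t3 x y)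

lemma vc_decomp (v : Vc) : v = v 0 • ef 0 + v 1 • ef 1 + v 2 • ef 2 + v 3 • ef 3 := by
  funext j; fin_cases j <;> simp [ef]

lemma dot_ef (ℓ : Vc) (j : Fin 4) : ℓ ⬝ᵥ ef j = ℓ j := by
  fin_cases j <;> simp [ef, dotProduct, Fin.sum_univ_four]

lemma gfun (c e : ℤ) (g : Vc ≃ₗ[ℂ] Vc) (hg : IsAnti ⇑g) (hgw : omegaF ⇑g = h0v c e)
    (v : Vc) : g v = ![(c:ℂ)*e*v 1, -((c:ℂ)*e*v 0), (c:ℂ)*v 3, -((c:ℂ)*v 2)] := by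
  have hC : ∀ i j : Fin 4, g (ef i) j = -(g (ef j) i) := by
    intro i j
    have := hg (ef i) (ef j)
    rwa [dot_ef, dot_ef] at this
  have hD : ∀ i : Fin 4, g (ef i) i = 0 := by
    intro i; have := hC i i; linear_combination this / 2
  have hW : ∀ k : Fin 6, omegaF ⇑g k = h0v c e k := fun k => congrFun hgw k
  have t0 : (g (ef 1) ⬝ᵥ ef 0 - g (ef 0) ⬝ᵥ ef 1) / 2 = (c:ℂ)*(e:ℂ) := hW 0
  have t1 : (g (ef 2) ⬝ᵥ ef 0 - g (ef 0) ⬝ᵥ ef 2) / 2 = 0 := hW 1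
  have t2 : (g (ef 3) ⬝ᵥ ef 0 - g (ef 0) ⬝ᵥ ef 3) / 2 = 0 := hW 2
  have t3 : (g (ef 2) ⬝ᵥ ef 1 - g (ef 1) ⬝ᵥ ef 2) / 2 = 0 := hW 3
  have t4 : (g (ef 3) ⬝ᵥ ef 1 - g (ef 1) ⬝ᵥ ef 3) / 2 = 0 := hW 4
  have t5 : (g (ef 3) ⬝ᵥ ef 2 - g (ef 2) ⬝ᵥ ef 3) / 2 = (c:ℂ) := hW 5
  simp only [dot_ef] at t0 t1 t2 t3 t4 t5
  have e10 : g (ef 1) 0 = (c:ℂ)*e := by linear_combination t0 + hC 0 1 / 2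
  have e20 : g (ef 2) 0 = 0 := by linear_combination t1 + hC 0 2 / 2
  have e30 : g (ef 3) 0 = 0 := by linear_combination t2 + hC 0 3 / 2
  have e21 : g (ef 2) 1 = 0 := by linear_combination t3 + hC 1 2 / 2
  have e31 : g (ef 3) 1 = 0 := by linear_combination t4 + hC 1 3 / 2
  have e32 : g (ef 3) 2 = (c:ℂ) := by linear_combination t5 + hC 2 3 / 2
  have e01 : g (ef 0) 1 = -((c:ℂ)*e) := by rw [hC 0 1, e10]
  have e02 : g (ef 0) 2 = 0 := by rw [hC 0 2, e20]; ring
  have e03 : g (ef 0) 3 = 0 := by rw [hC 0 3, e30]; ring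
  have e12 : g (ef 1) 2 = 0 := by rw [hC 1 2, e21]; ring
  have e13 : g (ef 1) 3 = 0 := by rw [hC 1 3, e31]; ring
  have e23 : g (ef 2) 3 = -(c:ℂ) := by rw [hC 2 3, e32]
  have hv : g v = v 0 • g (ef 0) + v 1 • g (ef 1) + v 2 • g (ef 2) + v 3 • g (ef 3) := by
    conv_lhs => rw [vc_decomp v]
    simp
  funext j
  fin_cases j
  · simp [hv]
    linear_combination v 0 * hD 0 + v 1 * e10 + v 2 * e20 + v 3 * e30
  · simp [hv]
    linear_combination v 0 * e01 + v 1 * hD 1 + v 2 * e21 + v 3 * e31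
  · simp [hv]
    linear_combination v 0 * e02 + v 1 * e12 + v 2 * hD 2 + v 3 * e32
  · simp [hv]
    linear_combination v 0 * e03 + v 1 * e13 + v 2 * e23 + v 3 * hD 3

lemma w2c0 (a b : Vc) : w2 a b 0 = a 0 * b 1 - a 1 * b 0 := rfl
lemma w2c5 (a b : Vc) : w2 a b 5 = a 2 * b 3 - a 3 * b 2 := rfl
lemma iotac0 (Ω : W2) : iotaMap Ω 0 = Ω 5 := rfl
lemma iotac5 (Ω : W2) : iotaMap Ω 5 = Ω 0 := rfl

lemma ethFormula (t1 t2 t3 c e s : ℤ) (g : Vc ≃ₗ[ℂ] Vc) (hg : IsAnti ⇑g)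
    (hgw : omegaF ⇑g = h0v c e) (v w : Vc) (l l' : ℂ) :
    Eth t1 t2 t3 c e s (v, l • g v) (w, l' • g w) =
      (c:ℂ) * ((e:ℂ) * (v 0 * w 1 - v 1 * w 0) + (v 2 * w 3 - v 3 * w 2)) *
        ((t1:ℂ) + (t2:ℂ) * l * l' * (c:ℂ)^2 * (e:ℂ) - (s:ℂ) * (t3:ℂ) * (l + l')) := by
  have hv := gfun c e g hg hgw v
  have hw := gfun c e g hg hgw w
  simp only [Eth, hev, Phi, Pi.add_apply, Pi.smul_apply, smul_eq_mul, w2c0, w2c5, iotac0, iotac5,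
    hv, hw, dotProduct, Fin.sum_univ_four]
  simp only [Matrix.cons_val_zero, Matrix.cons_val_one, Matrix.head_cons,
    Matrix.cons_val_two, Matrix.tail_cons, Matrix.cons_val_three]
  ring

lemma musq (N b : ℚ) (h : 0 < N - b ^ 2) :
    sqNb N b ^ 2 = ((b : ℂ)) ^ 2 - ((N : ℂ)) := by
  have h0 : (0:ℝ) ≤ ((N - b ^ 2 : ℚ) : ℝ) := by exact_mod_cast h.le
  have : ((Real.sqrt ((N - b ^ 2 : ℚ) : ℝ)) : ℂ) ^ 2 = (((N - b ^ 2 : ℚ) : ℝ) : ℂ) := by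
    norm_cast
    exact Real.sq_sqrt h0
  rw [sqNb, mul_pow, Complex.I_sq, this]
  push_cast
  ring

lemma psiApply (g : Vc ≃ₗ[ℂ] Vc) (N b : ℚ) (p : Vc × Vc) :
    PsiL g N b p = (g.symm p.2 - ((b:ℚ):ℂ) • p.1, ((b:ℚ):ℂ) • p.2 - ((N:ℚ):ℂ) • g p.1) := rfl

/-- **(From the proof of Theorem 5.2 in O'Grady.)** With the setup as in the context and
`N − b² > 0`, set `λ₁ = b + i√(N−b²)`, `λ₂ = b − i√(N−b²)`.  Then the
`±i√(N−b²)`-eigenspaces of `Ψ` are `{(v, λ₁·g(v))}` resp. `{(v, λ₂·g(v))}`; each is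
isotropic for `⟨,⟩_{θ,h}`; and
`⟨(v,λ₁·g v), (w,λ₂·g w)⟩_{θ,h} = θ₁·c⁻²·e⁻¹·(2c²e − s²/m)·ω_g(v,w)`. -/
theorem statement17 (t1 t2 t3 : ℤ) (h1 : t1 ≠ 0) (h2 : t2 ≠ 0) (h3 : t3 ≠ 0)
    (m : ℚ) (hm : 0 < m) (hrel : (t1 : ℚ) * t2 = 2 * m * t3 ^ 2)
    (c e s : ℤ) (hc : 0 < c) (he : 0 < e)
    (g : Vc ≃ₗ[ℂ] Vc) (hg : IsAnti ⇑g) (hgw : omegaF ⇑g = h0v c e)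
    (hNb : 0 < Nq t1 t2 c e - bq t2 t3 c e s ^ 2) :
    ((Module.End.eigenspace (PsiL g (Nq t1 t2 c e) (bq t2 t3 c e s))
          (sqNb (Nq t1 t2 c e) (bq t2 t3 c e s)) : Set (Vc × Vc)) =
        {p : Vc × Vc |
          p.2 = (((bq t2 t3 c e s : ℚ) : ℂ) + sqNb (Nq t1 t2 c e) (bq t2 t3 c e s)) • g p.1} ∧
      (Module.End.eigenspace (PsiL g (Nq t1 t2 c e) (bq t2 t3 c e s))
          (-sqNb (Nq t1 t2 c e) (bq t2 t3 c e s)) : Set (Vc × Vc)) =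
        {p : Vc × Vc |
          p.2 = (((bq t2 t3 c e s : ℚ) : ℂ) - sqNb (Nq t1 t2 c e) (bq t2 t3 c e s)) • g p.1}) ∧
    (∀ v w : Vc,
      Eth t1 t2 t3 c e s
        (v, (((bq t2 t3 c e s : ℚ) : ℂ) + sqNb (Nq t1 t2 c e) (bq t2 t3 c e s)) • g v)
        (w, (((bq t2 t3 c e s : ℚ) : ℂ) + sqNb (Nq t1 t2 c e) (bq t2 t3 c e s)) • g w) = 0 ∧
      Eth t1 t2 t3 c e s
        (v, (((bq t2 t3 c e s : ℚ) : ℂ) - sqNb (Nq t1 t2 c e) (bq t2 t3 c e s)) • g v)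
        (w, (((bq t2 t3 c e s : ℚ) : ℂ) - sqNb (Nq t1 t2 c e) (bq t2 t3 c e s)) • g w) = 0) ∧
    (∀ v w : Vc,
      Eth t1 t2 t3 c e s
        (v, (((bq t2 t3 c e s : ℚ) : ℂ) + sqNb (Nq t1 t2 c e) (bq t2 t3 c e s)) • g v)
        (w, (((bq t2 t3 c e s : ℚ) : ℂ) - sqNb (Nq t1 t2 c e) (bq t2 t3 c e s)) • g w) =
        (t1 : ℂ) * ((c : ℂ) ^ 2)⁻¹ * ((e : ℂ))⁻¹ *
          (2 * (c : ℂ) ^ 2 * (e : ℂ) - (s : ℂ) ^ 2 / (m : ℂ)) *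
          ((g w ⬝ᵥ v - g v ⬝ᵥ w) / 2)) := by
  set N : ℚ := Nq t1 t2 c e with hNdef
  set b : ℚ := bq t2 t3 c e s with hbdef
  set μ : ℂ := sqNb N b with hμdef
  set bC : ℂ := ((b : ℚ) : ℂ) with hbCdef
  set NC : ℂ := ((N : ℚ) : ℂ) with hNCdef
  have hcQ : (c:ℚ) ≠ 0 := by exact_mod_cast hc.ne'
  have heQ : (e:ℚ) ≠ 0 := by exact_mod_cast he.ne'
  have ht2Q : (t2:ℚ) ≠ 0 := by exact_mod_cast h2
  have hcC : (c:ℂ) ≠ 0 := by exact_mod_cast hc.ne'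
  have heC : (e:ℂ) ≠ 0 := by exact_mod_cast he.ne'
  have ht2C : (t2:ℂ) ≠ 0 := by exact_mod_cast h2
  have hmC : (m:ℂ) ≠ 0 := by exact_mod_cast hm.ne'
  have hNQ : (c:ℚ)^2 * e * t2 * N = t1 := by
    rw [hNdef, Nq]; field_simp
  have hbQ : (c:ℚ)^2 * e * t2 * b = s * t3 := by
    rw [hbdef, bq]; field_simp
  have hNC : (c:ℂ)^2 * (e:ℂ) * (t2:ℂ) * NC = (t1:ℂ) := by
    have := congrArg (fun q : ℚ => (q : ℂ)) hNQ
    push_cast at this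
    exact this
  have hbC : (c:ℂ)^2 * (e:ℂ) * (t2:ℂ) * bC = (s:ℂ) * (t3:ℂ) := by
    have := congrArg (fun q : ℚ => (q : ℂ)) hbQ
    push_cast at this
    exact this
  have hrelC : (t1:ℂ) * (t2:ℂ) = 2 * (m:ℂ) * (t3:ℂ)^2 := by
    have := congrArg (fun q : ℚ => (q : ℂ)) hrel
    push_cast at this
    exact this
  have hmusq : μ ^ 2 = bC ^ 2 - NC := musq N b hNb
  have hdot : ∀ v w : Vc, g w ⬝ᵥ v - g v ⬝ᵥ w =
      2*(c:ℂ)*((e:ℂ)*(v 0*w 1 - v 1*w 0) + (v 2*w 3 - v 3*w 2)) := by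
    intro v w
    rw [gfun c e g hg hgw v, gfun c e g hg hgw w]
    simp only [dotProduct, Fin.sum_univ_four, Matrix.cons_val_zero, Matrix.cons_val_one,
      Matrix.head_cons, Matrix.cons_val_two, Matrix.tail_cons, Matrix.cons_val_three]
    ring
  refine ⟨⟨?_, ?_⟩, ?_, ?_⟩
  · ext p
    simp only [SetLike.mem_coe, Set.mem_setOf_eq, Module.End.mem_eigenspace_iff]
    constructor
    · intro hp
      have h1 := congrArg Prod.fst hp
      rw [psiApply] at h1
      simp only at h1
      have h2' : g.symm p.2 = (bC + μ) • p.1 := by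
        rw [add_smul]
        rw [sub_eq_iff_eq_add] at h1
        rw [h1, Prod.smul_fst]
        abel
      have := congrArg g h2'
      rwa [g.apply_symm_apply, _root_.map_smul] at this
    · intro hp
      rw [psiApply]
      apply Prod.ext
      · show g.symm p.2 - bC • p.1 = μ • p.1
        rw [hp, _root_.map_smul, LinearEquiv.symm_apply_apply]
        module
      · show bC • p.2 - NC • g p.1 = μ • p.2
        rw [hp, smul_smul, smul_smul, ← sub_smul]
        congr 1
        linear_combination -hmusq
  · ext p
    simp only [SetLike.mem_coe, Set.mem_setOf_eq, Module.End.mem_eigenspace_iff]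
    constructor
    · intro hp
      have h1 := congrArg Prod.fst hp
      rw [psiApply] at h1
      simp only at h1
      have h2' : g.symm p.2 = (bC - μ) • p.1 := by
        rw [sub_smul]
        rw [sub_eq_iff_eq_add] at h1
        rw [h1, Prod.smul_fst]
        module
      have := congrArg g h2'
      rwa [g.apply_symm_apply, _root_.map_smul] at this
    · intro hp
      rw [psiApply]
      apply Prod.ext
      · show g.symm p.2 - bC • p.1 = (-μ) • p.1
        rw [hp, _root_.map_smul, LinearEquiv.symm_apply_apply]
        module
      · show bC • p.2 - NC • g p.1 = (-μ) • p.2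
        rw [hp, smul_smul, smul_smul, ← sub_smul]
        congr 1
        linear_combination -hmusq
  · intro v w
    constructor
    · rw [ethFormula t1 t2 t3 c e s g hg hgw]
      linear_combination ((c:ℂ) * ((e:ℂ)*(v 0*w 1 - v 1*w 0) + (v 2*w 3 - v 3*w 2))) *
        ((t2:ℂ)*(c:ℂ)^2*(e:ℂ)*hmusq - hNC + (2*bC+2*μ)*hbC)
    · rw [ethFormula t1 t2 t3 c e s g hg hgw]
      linear_combination ((c:ℂ) * ((e:ℂ)*(v 0*w 1 - v 1*w 0) + (v 2*w 3 - v 3*w 2))) *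
        ((t2:ℂ)*(c:ℂ)^2*(e:ℂ)*hmusq - hNC + (2*bC-2*μ)*hbC)
  · intro v w
    rw [ethFormula t1 t2 t3 c e s g hg hgw, hdot v w]
    have hmQ : m ≠ 0 := hm.ne'
    have kz3Q : (t1:ℚ) + (t2:ℚ)*N*(c:ℚ)^2*(e:ℚ) - (s:ℚ)*(t3:ℚ)*(2*b) =
        (t1:ℚ) * (((c:ℚ)^2)⁻¹) * ((e:ℚ)⁻¹) * (2*(c:ℚ)^2*(e:ℚ) - (s:ℚ)^2/m) := by
      rw [hNdef, hbdef, Nq, bq]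
      field_simp
      linear_combination (s:ℚ)^2*hrel
    have kz3C : (t1:ℂ) + (t2:ℂ)*NC*(c:ℂ)^2*(e:ℂ) - (s:ℂ)*(t3:ℂ)*(2*bC) =
        (t1:ℂ) * (((c:ℂ)^2)⁻¹) * ((e:ℂ)⁻¹) * (2*(c:ℂ)^2*(e:ℂ) - (s:ℂ)^2/(m:ℂ)) := by
      have := congrArg (fun q : ℚ => (q : ℂ)) kz3Q
      push_cast at this
      exact this
    linear_combination ((c:ℂ) * ((e:ℂ)*(v 0*w 1 - v 1*w 0) + (v 2*w 3 - v 3*w 2))) * kz3C -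
      ((c:ℂ) * ((e:ℂ)*(v 0*w 1 - v 1*w 0) + (v 2*w 3 - v 3*w 2))) * (t2:ℂ)*(c:ℂ)^2*(e:ℂ)*hmusq
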